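/- Let n ≥ 1 and let V be the real vector space of 4×(4n) real matrices. For any orthonormal vectors v₁, …, v_{4n} ∈ V (so that ξ = v₁ ∧ ⋯ ∧ v_{4n} is a decomposable unit 4n-vector), one has (Σ_{i=1}^{4} ξ_{i,i,…,i})² ≤ 1, where ξ_{i,…,i} is the Plücker coordinate with all row indices equal to i. -/

import Mathlib

open Matrix Finset in
lemma trace_eq_sum_eigs {m : Type*} [Fintype m] [DecidableEq m]
    {M : Matrix m m ℝ} (hM : M.IsHermitian) :
    M.trace = ∑ i, hM.eigenvalues i := by
  conv_lhs => rw [hM.spectral_theorem]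
  rw [Unitary.conjStarAlgAut_apply, Matrix.trace_mul_cycle]
  rw [(Matrix.mem_unitaryGroup_iff').mp (hM.eigenvectorUnitary).2, one_mul]
  simp [Matrix.trace_diagonal]

open Matrix Finset in
lemma det_le_trace_pow {m : Type*} [Fintype m] [DecidableEq m] [Nonempty m]
    {M : Matrix m m ℝ} (hM : M.PosSemidef) :
    M.det ≤ (M.trace / (Fintype.card m : ℝ)) ^ (Fintype.card m) := by
  set c : ℝ := (Fintype.card m : ℝ) with hc
  have hc0 : 0 < c := by positivity
  have hH := hM.isHermitian
  have hnn : ∀ i, 0 ≤ hH.eigenvalues i := hM.eigenvalues_nonneg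
  have amgm := Real.geom_mean_le_arith_mean_weighted Finset.univ
    (fun _ => c⁻¹) hH.eigenvalues (fun i _ => by positivity)
    (by rw [Finset.sum_const, Finset.card_univ, nsmul_eq_mul, ← hc, mul_inv_cancel₀ hc0.ne']) (fun i _ => hnn i)
  have hdet : M.det = ∏ i, hH.eigenvalues i := by
    have := hH.det_eq_prod_eigenvalues
    simpa using this
  have htr : M.trace = ∑ i, hH.eigenvalues i := trace_eq_sum_eigs hH
  -- raise amgm to the power card m
  have hpow : (∏ i, hH.eigenvalues i ^ (c⁻¹ : ℝ)) ^ (Fintype.card m)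
      ≤ (∑ i : m, c⁻¹ * hH.eigenvalues i) ^ (Fintype.card m) :=
    pow_le_pow_left₀ (Finset.prod_nonneg fun i _ => Real.rpow_nonneg (hnn i) _) amgm _
  have hL : (∏ i, hH.eigenvalues i ^ (c⁻¹ : ℝ)) ^ (Fintype.card m) = ∏ i, hH.eigenvalues i := by
    rw [← Finset.prod_pow]
    refine Finset.prod_congr rfl fun i _ => ?_
    rw [← Real.rpow_natCast (hH.eigenvalues i ^ (c⁻¹ : ℝ)), ← Real.rpow_mul (hnn i)]
    rw [← hc, inv_mul_cancel₀ (ne_of_gt hc0), Real.rpow_one]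
  have hR : (∑ i : m, c⁻¹ * hH.eigenvalues i) = M.trace / c := by
    rw [htr, ← Finset.mul_sum]; ring
  rw [hdet, ← hL, ← hR]
  exact hpow


/- STATEMENT 16: For orthonormal `v₁,…,v_{4n}` in `V = Fin 4 → Fin (4n) → ℝ` (so that
`ξ = v₁∧⋯∧v_{4n}` is a decomposable unit 4n-vector), the Plücker coordinates satisfy
`(∑_{i=1}^{4} ξ_{i,…,i})² ≤ 1`. -/

/-- Plücker coordinate `ξ_{i₁,…,i_{4n}} := det M`, `M_{ab} = (v_b)_{i_a, a}`. -/
noncomputable def xi (n : ℕ) (v : Fin (4 * n) → (Fin 4 → Fin (4 * n) → ℝ))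
    (i : Fin (4 * n) → Fin 4) : ℝ :=
  Matrix.det (Matrix.of fun a b => v b (i a) a)

theorem stmt_16 (n : ℕ) (hn : 1 ≤ n) (v : Fin (4 * n) → (Fin 4 → Fin (4 * n) → ℝ))
    (hv : ∀ a b, (∑ i : Fin 4, ∑ k : Fin (4 * n), v a i k * v b i k) = if a = b then 1 else 0) :
    (∑ i : Fin 4, xi n v (fun _ => i)) ^ 2 ≤ 1 := by
  have hn0 : (0:ℝ) < (4 * n : ℕ) := by positivity
  haveI : Nonempty (Fin (4 * n)) := ⟨⟨0, by omega⟩⟩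
  set A : Fin 4 → Matrix (Fin (4 * n)) (Fin (4 * n)) ℝ :=
    fun i => Matrix.of fun a b => v b i a with hA
  -- traces
  set t : Fin 4 → ℝ := fun i => ((A i).conjTranspose * A i).trace / ((4 * n : ℕ) : ℝ) with ht
  have htnn : ∀ i, 0 ≤ t i := by
    intro i
    have : 0 ≤ ((A i).conjTranspose * A i).trace := by
      simp only [Matrix.trace, Matrix.diag, Matrix.mul_apply, Matrix.conjTranspose_apply,
        star_trivial, ← sq]
      positivity
    positivity
  have htsum : ∑ i, t i = 1 := by
    have : ∑ i : Fin 4, ((A i).conjTranspose * A i).trace = (4 * n : ℕ) := by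
      simp only [Matrix.trace, Matrix.diag, Matrix.mul_apply, Matrix.conjTranspose_apply]
      rw [Finset.sum_comm]
      calc ∑ b : Fin (4*n), ∑ i : Fin 4, ∑ a : Fin (4*n),
            star ((A i) a b) * (A i) a b
          = ∑ b : Fin (4*n), (1:ℝ) := by
            refine Finset.sum_congr rfl fun b _ => ?_
            have := hv b b
            simpa [hA, mul_comm] using this
        _ = (4 * n : ℕ) := by simp
    rw [ht, ← Finset.sum_div, this]
    field_simp
  have ht1 : ∀ i, t i ≤ 1 := by
    intro i
    calc t i ≤ ∑ j, t j := Finset.single_le_sum (fun j _ => htnn j) (Finset.mem_univ i)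
      _ = 1 := htsum
  -- determinant bound
  have hdet : ∀ i, |xi n v (fun _ => i)| ≤ t i := by
    intro i
    have hxi : xi n v (fun _ => i) = (A i).det := rfl
    have hps := Matrix.posSemidef_conjTranspose_mul_self (A i)
    have hd := det_le_trace_pow hps
    rw [Matrix.det_mul, Matrix.det_conjTranspose, star_trivial] at hd
    have hdsq : ((A i).det) ^ 2 ≤ t i ^ (4 * n) := by
      calc ((A i).det) ^ 2 = (A i).det * (A i).det := sq ((A i).det)
        _ ≤ (((A i).conjTranspose * A i).trace / ((Fintype.card (Fin (4*n)) : ℝ))) ^ (Fintype.card (Fin (4*n))) := hd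
        _ = t i ^ (4 * n) := by simp [ht]
    have h0 : 0 ≤ t i ^ (2 * n) := pow_nonneg (htnn i) _
    have h1 : ((A i).det) ^ 2 ≤ (t i ^ (2 * n)) ^ 2 := by
      rw [← pow_mul]
      have h2 : 2 * n * 2 = 4 * n := by ring
      rw [h2]; exact hdsq
    have h2n : |(A i).det| ≤ t i ^ (2 * n) := by
      nlinarith [abs_nonneg ((A i).det), sq_abs ((A i).det)]
    calc |xi n v (fun _ => i)| = |(A i).det| := by rw [hxi]
      _ ≤ t i ^ (2 * n) := h2n
      _ ≤ t i ^ 1 := pow_le_pow_of_le_one (htnn i) (ht1 i) (by omega)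
      _ = t i := pow_one _
  -- conclude
  have habs : |∑ i : Fin 4, xi n v (fun _ => i)| ≤ 1 := by
    calc |∑ i : Fin 4, xi n v (fun _ => i)| ≤ ∑ i : Fin 4, |xi n v (fun _ => i)| :=
          Finset.abs_sum_le_sum_abs _ _
      _ ≤ ∑ i, t i := Finset.sum_le_sum fun i _ => hdet i
      _ = 1 := htsum
  nlinarith [abs_nonneg (∑ i : Fin 4, xi n v (fun _ => i)),
    sq_abs (∑ i : Fin 4, xi n v (fun _ => i))]
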